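/- Let k be a commutative ring, R a commutative k-algebra, and R' a commutative R-algebra (so R' is a k-algebra and the structure maps are compatible). If R' is formally étale over R, then every k-derivation of R extends uniquely to a k-derivation of R': for every k-linear derivation d : R → R there exists a unique k-linear derivation d' : R' → R' such that d'(f(r)) = f(d(r)) for all r ∈ R, where f : R → R' is the structure map. -/
import Mathlib

open TrivSqZeroExt

/-- Let `k` be a commutative ring, `R` a commutative `k`-algebra and
`R'` a commutative `R`-algebra (compatibly a `k`-algebra).  If `R'` is formally étale
over `R`, then every `k`-derivation of `R` extends uniquely to a `k`-derivation of
`R'` along the structure map `R → R'`. -/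
theorem derivation_extends_uniquely_of_formallyEtale.{u}
    (k : Type*) [CommRing k] (R : Type u) [CommRing R] [Algebra k R]
    (R' : Type u) [CommRing R'] [Algebra R R'] [Algebra k R'] [IsScalarTower k R R']
    [Algebra.FormallyEtale R R']
    (d : Derivation k R R) :
    ∃! d' : Derivation k R' R',
      ∀ r : R, d' (algebraMap R R' r) = algebraMap R R' (d r) := by
  classical
  -- the dual numbers over `R'`, with the `R`-algebra structure twisted by `d`
  let φ : R →+* TrivSqZeroExt R' R' :=
    { toFun := fun r => inl (algebraMap R R' r) + inr (algebraMap R R' (d r))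
      map_one' := by
        ext
        · simp only [fst_add, fst_inl, fst_inr, map_one, add_zero, fst_one]
        · simp only [snd_add, snd_inl, snd_inr, Derivation.map_one_eq_zero, map_zero,
            zero_add, snd_one]
      map_mul' := fun r s => by
        ext
        · simp only [fst_add, fst_inl, fst_inr, fst_mul, map_mul, add_zero]
        · simp only [snd_add, snd_inl, snd_inr, snd_mul, Derivation.leibniz, smul_eq_mul,
            map_add, map_mul, zero_add, fst_add, fst_inl, fst_inr, add_zero,
            op_smul_eq_mul]
          ring
      map_zero' := by
        ext
        · simp only [fst_add, fst_inl, fst_inr, map_zero, add_zero, fst_zero]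
        · simp only [snd_add, snd_inl, snd_inr, map_zero, zero_add, snd_zero]
      map_add' := fun r s => by
        ext
        · simp only [fst_add, fst_inl, fst_inr, map_add, add_zero]
        · simp only [snd_add, snd_inl, snd_inr, map_add, zero_add] }
  letI : Algebra R (TrivSqZeroExt R' R') := φ.toAlgebra
  have hφ : ∀ r : R, algebraMap R (TrivSqZeroExt R' R') r
      = inl (algebraMap R R' r) + inr (algebraMap R R' (d r)) := fun r => rfl
  let fstA : TrivSqZeroExt R' R' →ₐ[R] R' :=
    { toFun := fst
      map_one' := rfl
      map_mul' := fun x y => rfl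
      map_zero' := rfl
      map_add' := fun x y => rfl
      commutes' := fun r => by
        rw [hφ]
        simp only [fst_add, fst_inl, fst_inr, add_zero] }
  let I : Ideal (TrivSqZeroExt R' R') := RingHom.ker fstA.toRingHom
  have memI : ∀ x : TrivSqZeroExt R' R', x ∈ I ↔ fst x = 0 := fun x => Iff.rfl
  have hI : I ^ 2 = ⊥ := by
    rw [pow_two, eq_bot_iff]
    refine Ideal.mul_le.2 fun x hx y hy => ?_
    rw [memI] at hx hy
    rw [Ideal.mem_bot]
    ext
    · simp only [fst_mul, hx, hy, mul_zero, fst_zero]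
    · simp only [snd_mul, hx, hy, zero_smul, MulOpposite.op_zero, smul_zero, add_zero,
        snd_zero, zero_add]
  let q : R' →ₐ[R] TrivSqZeroExt R' R' ⧸ I :=
    { toRingHom := (Ideal.Quotient.mk I).comp (inlHom R' R')
      commutes' := fun r => by
        show Ideal.Quotient.mk I (inl (algebraMap R R' r))
          = Ideal.Quotient.mk I (algebraMap R (TrivSqZeroExt R' R') r)
        rw [Ideal.Quotient.eq, hφ, memI]
        simp only [fst_sub, fst_add, fst_inl, fst_inr, add_zero, sub_self] }
  obtain ⟨g, hg⟩ := (Algebra.FormallyEtale.comp_bijective (R := R) (A := R') I hI).2 q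
  have hgfst : ∀ x : R', fst (g x) = x := by
    intro x
    have h1 : Ideal.Quotient.mk I (g x) = Ideal.Quotient.mk I (inl x) :=
      DFunLike.congr_fun hg x
    rw [Ideal.Quotient.eq, memI] at h1
    rw [fst_sub, fst_inl, sub_eq_zero] at h1
    exact h1
  have hgsnd : ∀ r : R, snd (g (algebraMap R R' r)) = algebraMap R R' (d r) := by
    intro r
    rw [g.commutes r, hφ]
    simp only [snd_add, snd_inl, snd_inr, zero_add]
  have key : ∀ x y : R', snd (g (x * y)) = x * snd (g y) + y * snd (g x) := by
    intro x y
    rw [map_mul, snd_mul, hgfst, hgfst, smul_eq_mul, op_smul_eq_mul]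
    ring
  have halgk : ∀ c : k, snd (g (algebraMap k R' c)) = 0 := by
    intro c
    rw [IsScalarTower.algebraMap_apply k R R', hgsnd, Derivation.map_algebraMap, map_zero]
  -- the extension as a derivation
  let D : Derivation k R' R' :=
    { toFun := fun x => snd (g x)
      map_add' := fun x y => by
        show snd (g (x + y)) = snd (g x) + snd (g y)
        rw [map_add, snd_add]
      map_smul' := fun c x => by
        show snd (g (c • x)) = c • snd (g x)
        have hx : c • x = algebraMap k R' c * x := Algebra.smul_def c x
        have hrhs : c • snd (g x) = algebraMap k R' c * snd (g x) := Algebra.smul_def _ _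
        rw [hx, hrhs, key, halgk, mul_zero, add_zero]
      map_one_eq_zero' := by
        show snd (g 1) = 0
        rw [map_one, snd_one]
      leibniz' := fun x y => by
        show snd (g (x * y)) = x • snd (g y) + y • snd (g x)
        rw [key, smul_eq_mul, smul_eq_mul] }
  have hD : ∀ r : R, D (algebraMap R R' r) = algebraMap R R' (d r) := hgsnd
  refine ⟨D, hD, ?_⟩
  intro d'' h''
  -- uniqueness: the difference is an `R`-derivation, hence zero by formal unramifiedness
  let E : Derivation R R' R' :=
    { toFun := fun x => d'' x - D x
      map_add' := fun x y => by
        show (d'' (x + y)) - D (x + y) = (d'' x - D x) + (d'' y - D y)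
        rw [map_add, map_add]; ring
      map_smul' := fun r x => by
        show d'' (r • x) - D (r • x) = r • (d'' x - D x)
        have hx : r • x = algebraMap R R' r * x := Algebra.smul_def r x
        have hrhs : r • (d'' x - D x) = algebraMap R R' r * (d'' x - D x) :=
          Algebra.smul_def _ _
        rw [hx, hrhs, Derivation.leibniz, Derivation.leibniz, h'' r, hD r]
        simp only [smul_eq_mul]
        ring
      map_one_eq_zero' := by
        show d'' 1 - D 1 = 0
        rw [Derivation.map_one_eq_zero, Derivation.map_one_eq_zero, sub_zero]
      leibniz' := fun x y => by
        show d'' (x * y) - D (x * y) = x • (d'' y - D y) + y • (d'' x - D x)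
        rw [Derivation.leibniz, Derivation.leibniz]
        simp only [smul_eq_mul]
        ring }
  haveI : Subsingleton (Ω[R'⁄R]) :=
    Algebra.FormallyUnramified.subsingleton_kaehlerDifferential
  have hEzero : ∀ x : R', E x = 0 := by
    intro x
    have h1 : E x = E.liftKaehlerDifferential (KaehlerDifferential.D R R' x) :=
      (Derivation.liftKaehlerDifferential_comp_D E x).symm
    rw [h1, Subsingleton.elim (KaehlerDifferential.D R R' x) 0, map_zero]
  ext x
  have h2 : d'' x - D x = 0 := hEzero x
  exact sub_eq_zero.mp h2
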